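/- arXiv:1911.04220 — 2 statements merged into one kernel-verified Lean document; each statement's English description precedes it below -/
import Mathlib

section
/- Let Θ be a finite set, and let v : Δ(Θ) → ℝ be a concave function on the probability simplex Δ(Θ) ⊂ ℝ^Θ. Let {(b_i, v(b_i))}_{i∈I} be a finite set of points with each b_i a vertex of the simplex (a Dirac distribution), and suppose (b*, v(b*)) is an additional interior point with v(b*) > ∑_ϑ b*(ϑ) v(δ_ϑ). Then for any b ∈ Δ(Θ), the sawtooth value L(b) = c·b + φ(b)·(v(b*) − c·b*), where c(ϑ) = v(δ_ϑ) and φ(b) = min{ b(ϑ)/b*(ϑ) : ϑ ∈ Θ, b*(ϑ) > 0 }, satisfies L(b) ≤ v(b). -/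
open Finset

/-- The Dirac distribution at `ϑ`, a vertex of the probability simplex. -/
noncomputable def dirac {Θ : Type*} [DecidableEq Θ] (ϑ : Θ) : Θ → ℝ :=
  fun ϑ' => if ϑ' = ϑ then 1 else 0

lemma dirac_mem_simplex {Θ : Type*} [Fintype Θ] [DecidableEq Θ] (ϑ : Θ) :
    dirac ϑ ∈ stdSimplex ℝ Θ := by
  constructor
  · intro x; unfold dirac; positivity
  · simp [dirac]

lemma jensen_corner {Θ : Type*} [Fintype Θ] [DecidableEq Θ]
    (v : (Θ → ℝ) → ℝ) (hv : ConcaveOn ℝ (stdSimplex ℝ Θ) v)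
    (r : Θ → ℝ) (hr : r ∈ stdSimplex ℝ Θ) :
    (∑ ϑ, r ϑ * v (dirac ϑ)) ≤ v r := by
  have h := hv.le_map_sum (t := Finset.univ) (w := r) (p := dirac)
    (fun i _ => hr.1 i) hr.2 (fun i _ => dirac_mem_simplex i)
  have hsum : (∑ i, r i • dirac i) = r := by
    funext x
    simp only [Finset.sum_apply, Pi.smul_apply, dirac, smul_eq_mul, mul_ite, mul_one, mul_zero]
    simp
  rw [hsum] at h
  simpa [smul_eq_mul] using h

/-- Correctness of the sawtooth lower bound (SAWTOOTH-A in NC-PBVI): for a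
concave function `v` on the simplex, corner values `c(ϑ) = v(δ_ϑ)` together with
an interior point `b*` satisfying `v(b*) > c·b*` yield, for any belief `b`,
`c·b + φ(b)·(v(b*) − c·b*) ≤ v(b)`, where `φ(b) = min_ϑ b(ϑ)/b*(ϑ)`. -/
theorem sawtooth_lower_bound
    {Θ : Type*} [Fintype Θ] [Nonempty Θ] [DecidableEq Θ]
    (v : (Θ → ℝ) → ℝ)
    (hv : ConcaveOn ℝ (stdSimplex ℝ Θ) v)
    (bstar : Θ → ℝ) (hbstar : bstar ∈ stdSimplex ℝ Θ)
    (hbstar_int : ∀ ϑ, 0 < bstar ϑ)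
    (hlift : (∑ ϑ, bstar ϑ * v (dirac ϑ)) < v bstar) :
    ∀ b ∈ stdSimplex ℝ Θ,
      (∑ ϑ, b ϑ * v (dirac ϑ)) +
        (⨅ ϑ : Θ, b ϑ / bstar ϑ) * (v bstar - ∑ ϑ, bstar ϑ * v (dirac ϑ))
      ≤ v b := by
  intro b hb
  set φ : ℝ := ⨅ ϑ : Θ, b ϑ / bstar ϑ with hφdef
  have hbdd : BddBelow (Set.range fun ϑ : Θ => b ϑ / bstar ϑ) :=
    (Set.finite_range _).bddBelow
  have hφle : ∀ ϑ, φ ≤ b ϑ / bstar ϑ := fun ϑ => ciInf_le hbdd ϑ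
  have hφnonneg : 0 ≤ φ :=
    le_ciInf fun ϑ => div_nonneg (hb.1 ϑ) (hbstar_int ϑ).le
  have hkey : ∀ ϑ, φ * bstar ϑ ≤ b ϑ := by
    intro ϑ
    have := (le_div_iff₀ (hbstar_int ϑ)).mp (hφle ϑ)
    linarith
  have hφ1 : φ ≤ 1 := by
    by_contra h
    push_neg at h
    have : ∀ ϑ, bstar ϑ < b ϑ := by
      intro ϑ
      have := hkey ϑ
      nlinarith [hbstar_int ϑ]
    have hsum : (1:ℝ) < 1 := by
      calc (1:ℝ) = ∑ ϑ, bstar ϑ := hbstar.2.symm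
        _ < ∑ ϑ, b ϑ := Finset.sum_lt_sum_of_nonempty Finset.univ_nonempty (fun i _ => this i)
        _ = 1 := hb.2
    exact lt_irrefl _ hsum
  rcases eq_or_lt_of_le hφ1 with hφeq | hφlt
  · -- φ = 1, so b = bstar
    have hbeq : b = bstar := by
      funext ϑ
      by_contra hne
      have hlt : bstar ϑ < b ϑ := by
        have h2 := hkey ϑ; rw [hφeq] at h2
        rcases lt_or_eq_of_le (by linarith : bstar ϑ ≤ b ϑ) with h | h
        · exact h
        · exact absurd h.symm hne
      have : (1:ℝ) < 1 := by
        calc (1:ℝ) = ∑ ϑ', bstar ϑ' := hbstar.2.symm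
          _ < ∑ ϑ', b ϑ' := by
              apply Finset.sum_lt_sum
              · intro i _
                have h3 := hkey i; rw [hφeq] at h3; linarith
              · exact ⟨ϑ, Finset.mem_univ ϑ, hlt⟩
          _ = 1 := hb.2
      exact lt_irrefl _ this
    rw [hbeq, hφeq]
    ring_nf
    linarith
  · -- φ < 1, define residual r
    set r : Θ → ℝ := fun ϑ => (b ϑ - φ * bstar ϑ) / (1 - φ) with hrdef
    have h1φ : (0:ℝ) < 1 - φ := by linarith
    have hrmem : r ∈ stdSimplex ℝ Θ := by
      constructor
      · intro ϑ
        exact div_nonneg (by linarith [hkey ϑ]) h1φ.le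
      · rw [← Finset.sum_div]
        rw [Finset.sum_sub_distrib, ← Finset.mul_sum, hb.2, hbstar.2]
        field_simp
    have hcomb : φ • bstar + (1 - φ) • r = b := by
      funext ϑ
      simp only [Pi.add_apply, Pi.smul_apply, smul_eq_mul, hrdef]
      field_simp
      ring
    have hconc := hv.2 hbstar hrmem hφnonneg h1φ.le (by ring)
    rw [hcomb] at hconc
    simp only [smul_eq_mul] at hconc
    have hjr := jensen_corner v hv r hrmem
    -- c·r relation: (1-φ) * c·r = c·b - φ * c·bstar
    have hcr : (1 - φ) * (∑ ϑ, r ϑ * v (dirac ϑ))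
        = (∑ ϑ, b ϑ * v (dirac ϑ)) - φ * (∑ ϑ, bstar ϑ * v (dirac ϑ)) := by
      rw [Finset.mul_sum]
      have hc : ∀ i ∈ Finset.univ, (1 - φ) * (r i * v (dirac i))
          = b i * v (dirac i) - φ * (bstar i * v (dirac i)) := by
        intro i _
        simp only [hrdef]
        field_simp
      rw [Finset.sum_congr rfl hc, Finset.sum_sub_distrib, ← Finset.mul_sum]
    nlinarith [mul_le_mul_of_nonneg_left hjr h1φ.le]
end

section
/- Fenchel-type duality for the one-shot incomplete-information value: let Θ and X, Y be finite sets, u : X × Y × Θ → ℝ, and define the primal value v(b) = max_{α ∈ Δ(X)^Θ} min_{β ∈ Δ(Y)} ∑_{ϑ,x,y} b(ϑ) α_ϑ(x) β(y) u(x,y,ϑ) for b ∈ Δ(Θ), and the dual value w(ζ) = min_{β ∈ Δ(Y)} max_{(x,ϑ) ∈ X×Θ} { ζ(ϑ) + ∑_y β(y) u(x,y,ϑ) } for ζ ∈ ℝ^Θ. Then w(ζ) = max_{b ∈ Δ(Θ)} { v(b) + ∑_ϑ b(ϑ) ζ(ϑ) }; in particular w is the convex conjugate-type transform of the concave function v,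 and w is convex in ζ while v is concave in b. -/
open Finset

/-- The probability simplex over a finite type, as a subtype. -/
def Simplex (A : Type*) [Fintype A] : Type _ :=
  {α : A → ℝ // (∀ a, 0 ≤ α a) ∧ ∑ a, α a = 1}

/-- The primal one-shot value of the incomplete-information game:
`v(b) = max_{α ∈ Δ(X)^Θ} min_{β ∈ Δ(Y)} ∑_{ϑ,x,y} b(ϑ) α_ϑ(x) β(y) u(x,y,ϑ)`. -/
noncomputable def primalValue {Θ X Y : Type*} [Fintype Θ] [Fintype X] [Fintype Y]
    (u : X → Y → Θ → ℝ) (b : Θ → ℝ) : ℝ :=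
  ⨆ α : {α : Θ → X → ℝ // ∀ ϑ, (∀ x, 0 ≤ α ϑ x) ∧ ∑ x, α ϑ x = 1},
    ⨅ β : Simplex Y, ∑ ϑ, ∑ x, ∑ y, b ϑ * α.1 ϑ x * β.1 y * u x y ϑ

/-- The dual one-shot value:
`w(ζ) = min_{β ∈ Δ(Y)} max_{(x,ϑ)} { ζ(ϑ) + ∑_y β(y) u(x,y,ϑ) }`. -/
noncomputable def dualValue {Θ X Y : Type*} [Fintype Θ] [Fintype X] [Fintype Y]
    (u : X → Y → Θ → ℝ) (ζ : Θ → ℝ) : ℝ :=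
  ⨅ β : Simplex Y, ⨆ p : X × Θ, (ζ p.2 + ∑ y, β.1 y * u p.1 y p.2)

noncomputable instance simplexNonempty (A : Type*) [Fintype A] [Nonempty A] :
    Nonempty (Simplex A) := by
  refine ⟨⟨fun _ => (Fintype.card A : ℝ)⁻¹, fun a => by positivity, ?_⟩⟩
  have h : (0:ℝ) < Fintype.card A := by
    exact_mod_cast Fintype.card_pos
  rw [Finset.sum_const, nsmul_eq_mul, Finset.card_univ]
  field_simp

lemma simplex_avg_le {A : Type*} [Fintype A] (π : Simplex A) {f : A → ℝ} {c : ℝ}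
    (h : ∀ a, f a ≤ c) : ∑ a, π.1 a * f a ≤ c := by
  calc ∑ a, π.1 a * f a ≤ ∑ a, π.1 a * c :=
        Finset.sum_le_sum fun a _ => mul_le_mul_of_nonneg_left (h a) (π.2.1 a)
    _ = c := by rw [← Finset.sum_mul, π.2.2, one_mul]

lemma le_simplex_avg {A : Type*} [Fintype A] (π : Simplex A) {f : A → ℝ} {c : ℝ}
    (h : ∀ a, c ≤ f a) : c ≤ ∑ a, π.1 a * f a := by
  calc c = ∑ a, π.1 a * c := by rw [← Finset.sum_mul, π.2.2, one_mul]
    _ ≤ ∑ a, π.1 a * f a :=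
        Finset.sum_le_sum fun a _ => mul_le_mul_of_nonneg_left (h a) (π.2.1 a)

section Minimax
variable {I Y : Type*} [Fintype I] [Fintype Y] [Nonempty I] [Nonempty Y]

lemma exists_good_prior (M : I → Y → ℝ) :
    ∃ π : Simplex I, ∀ β : Simplex Y,
      (⨅ β' : Simplex Y, ⨆ i, ∑ y, β'.1 y * M i y) ≤ ∑ i, π.1 i * ∑ y, β.1 y * M i y := by
  classical
  set C : ℝ := ∑ i, ∑ y, |M i y| with hC
  have hMC : ∀ i y, |M i y| ≤ C := by
    intro i y
    have h1 : |M i y| ≤ ∑ y, |M i y| :=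
      Finset.single_le_sum (f := fun y => |M i y|) (fun y _ => abs_nonneg _) (Finset.mem_univ y)
    have h2 : ∑ y, |M i y| ≤ C :=
      Finset.single_le_sum (f := fun i => ∑ y, |M i y|)
        (fun i _ => Finset.sum_nonneg fun y _ => abs_nonneg _) (Finset.mem_univ i)
    linarith
  have hpay_le : ∀ (β : Simplex Y) i, ∑ y, β.1 y * M i y ≤ C :=
    fun β i => simplex_avg_le β fun y => (abs_le.1 (hMC i y)).2
  have hpay_ge : ∀ (β : Simplex Y) i, -C ≤ ∑ y, β.1 y * M i y :=
    fun β i => le_simplex_avg β fun y => (abs_le.1 (hMC i y)).1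
  set G : Simplex Y → ℝ := fun β => ⨆ i, ∑ y, β.1 y * M i y with hG
  have hGle : ∀ β, G β ≤ C := fun β => ciSup_le fun i => hpay_le β i
  have hGge : ∀ β, -C ≤ G β := by
    intro β
    obtain ⟨i⟩ := (inferInstance : Nonempty I)
    exact le_trans (hpay_ge β i)
      (le_ciSup (f := fun i => ∑ y, β.1 y * M i y)
        (Set.Finite.bddAbove (Set.finite_range _)) i)
  set W : ℝ := ⨅ β : Simplex Y, G β with hW
  have hWle : ∀ β, W ≤ G β := fun β => ciInf_le ⟨-C, fun x ⟨β', hβ'⟩ => hβ' ▸ hGge β'⟩ β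
  -- separation
  set φfun : (Y → ℝ) → (I → ℝ) := fun β i => ∑ y, β y * M i y with hφfun
  set K : Set (I → ℝ) := φfun '' stdSimplex ℝ Y with hK
  set O : Set (I → ℝ) := Set.univ.pi fun _ : I => Set.Iio W with hO
  have hOconv : Convex ℝ O := convex_pi fun i _ => convex_Iio W
  have hOopen : IsOpen O := isOpen_set_pi Set.finite_univ fun i _ => isOpen_Iio
  have hKconv : Convex ℝ K := by
    have : K = (LinearMap.mk (σ := RingHom.id ℝ)
        ⟨φfun, by intro a b; funext i; simp [hφfun, add_mul, Finset.sum_add_distrib]⟩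
        (by intro c a; funext i;
            simp [hφfun, Finset.mul_sum, mul_assoc])) '' stdSimplex ℝ Y := rfl
    rw [this]
    exact (convex_stdSimplex ℝ Y).linear_image _
  have hdisj : Disjoint O K := by
    rw [Set.disjoint_left]
    rintro z hzO ⟨β, hβ, rfl⟩
    set β' : Simplex Y := ⟨β, hβ.1, hβ.2⟩ with hβ'
    obtain ⟨i₀, hi₀⟩ := Finite.exists_max (φfun β)
    have h1 : W ≤ G β' := hWle β'
    have h2 : G β' ≤ φfun β i₀ := ciSup_le fun i => hi₀ i
    have h3 : φfun β i₀ < W := hzO i₀ (Set.mem_univ _)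
    linarith
  obtain ⟨f, u, hfO, hfK⟩ := geometric_hahn_banach_open hOconv hOopen hKconv hdisj
  set π₀ : I → ℝ := fun i => f (Pi.single i 1) with hπ₀
  have f_eq : ∀ z : I → ℝ, f z = ∑ i, z i * π₀ i := by
    intro z
    have hz : z = ∑ i, z i • (Pi.single i 1 : I → ℝ) := by
      funext j
      rw [Finset.sum_apply]
      simp [Pi.single_apply, mul_comm]
    conv_lhs => rw [hz]
    rw [map_sum]
    simp only [map_smul, smul_eq_mul]
    rfl
  have memO : ∀ z : I → ℝ, (∀ i, z i < W) → z ∈ O := fun z h => fun i _ => h i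
  have hπ₀nonneg : ∀ i, 0 ≤ π₀ i := by
    intro i
    by_contra hneg
    push_neg at hneg
    set c : I → ℝ := fun _ => W - 1 with hc
    set t : ℝ := max ((u - f c) / (-π₀ i)) 0 with ht'
    have ht : 0 ≤ t := le_max_right _ _
    have hzO : (c - t • (Pi.single i 1 : I → ℝ)) ∈ O := by
      refine memO _ fun j => ?_
      simp only [Pi.sub_apply, Pi.smul_apply, smul_eq_mul, hc]
      rcases eq_or_ne i j with rfl | hij
      · rw [Pi.single_eq_same]; linarith
      · rw [Pi.single_eq_of_ne' hij]; linarith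
    have hlt := hfO _ hzO
    have hfval : f (c - t • (Pi.single i 1 : I → ℝ)) = f c - t * π₀ i := by
      rw [map_sub, map_smul, smul_eq_mul]
    have h1 : (u - f c) / (-π₀ i) ≤ t := le_max_left _ _
    have h2 : u - f c ≤ t * (-π₀ i) := by
      rw [div_le_iff₀ (by linarith)] at h1; linarith
    rw [hfval] at hlt
    linarith
  set S : ℝ := ∑ i, π₀ i with hS
  have hSnonneg : 0 ≤ S := Finset.sum_nonneg fun i _ => hπ₀nonneg i
  obtain ⟨β₀⟩ := (inferInstance : Nonempty (Simplex Y))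
  have hKmem : ∀ β : Simplex Y, φfun β.1 ∈ K := fun β => ⟨β.1, ⟨β.2.1, β.2.2⟩, rfl⟩
  have hSpos : 0 < S := by
    rcases hSnonneg.lt_or_eq with h | h
    · exact h
    · exfalso
      have hzero : ∀ i, π₀ i = 0 := by
        intro i
        have := (Finset.sum_eq_zero_iff_of_nonneg fun i _ => hπ₀nonneg i).1 h.symm
        exact this i (Finset.mem_univ i)
      have hf0 : ∀ z : I → ℝ, f z = 0 := by
        intro z; rw [f_eq]; simp [hzero]
      have h1 : f (fun _ : I => W - 1) < u := hfO _ (memO _ fun i => by norm_num)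
      have h2 : u ≤ f (φfun β₀.1) := hfK _ (hKmem β₀)
      rw [hf0] at h1
      rw [hf0] at h2
      linarith
  have hWS : W * S ≤ u := by
    by_contra h
    push_neg at h
    set ε : ℝ := (W * S - u) / S with hε
    have hεpos : 0 < ε := div_pos (by linarith) hSpos
    have hmem : (fun _ : I => W - ε) ∈ O := memO _ fun i => by linarith
    have hlt := hfO _ hmem
    have hfc : f (fun _ : I => W - ε) = (W - ε) * S := by
      rw [f_eq, ← Finset.mul_sum]
    have hεS : ε * S = W * S - u := div_mul_cancel₀ _ hSpos.ne'
    rw [hfc] at hlt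
    nlinarith
  refine ⟨⟨fun i => π₀ i / S, fun i => div_nonneg (hπ₀nonneg i) hSpos.le,
    by rw [← Finset.sum_div, ← hS, div_self hSpos.ne']⟩, ?_⟩
  intro β
  have h1 : u ≤ f (φfun β.1) := hfK _ (hKmem β)
  have h2 : f (φfun β.1) = ∑ i, φfun β.1 i * π₀ i := f_eq _
  have h3 : ∑ i, (π₀ i / S) * (∑ y, β.1 y * M i y) = (∑ i, φfun β.1 i * π₀ i) / S := by
    rw [Finset.sum_div]
    exact Finset.sum_congr rfl fun i _ => by rw [hφfun]; ring
  show W ≤ ∑ i, (π₀ i / S) * (∑ y, β.1 y * M i y)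
  rw [h3, le_div_iff₀ hSpos]
  linarith
end Minimax

section Main
variable {Θ X Y : Type*} [Fintype Θ] [Fintype X] [Fintype Y]

lemma sum_rearrange (u : X → Y → Θ → ℝ) (b : Θ → ℝ) (α : Θ → X → ℝ) (β : Y → ℝ) :
    ∑ ϑ, ∑ x, ∑ y, b ϑ * α ϑ x * β y * u x y ϑ
      = ∑ p : X × Θ, b p.2 * α p.2 p.1 * ∑ y, β y * u p.1 y p.2 := by
  calc ∑ ϑ, ∑ x, ∑ y, b ϑ * α ϑ x * β y * u x y ϑ
      = ∑ ϑ, ∑ x, b ϑ * α ϑ x * ∑ y, β y * u x y ϑ := by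
        refine Finset.sum_congr rfl fun ϑ _ => Finset.sum_congr rfl fun x _ => ?_
        rw [Finset.mul_sum]
        exact Finset.sum_congr rfl fun y _ => by ring
    _ = ∑ x, ∑ ϑ, b ϑ * α ϑ x * ∑ y, β y * u x y ϑ := Finset.sum_comm
    _ = ∑ p : X × Θ, b p.2 * α p.2 p.1 * ∑ y, β y * u p.1 y p.2 :=
        (Fintype.sum_prod_type
          (f := fun p : X × Θ => b p.2 * α p.2 p.1 * ∑ y, β y * u p.1 y p.2)).symm

lemma marginal_sum (g : Θ → ℝ) (h : X → Θ → ℝ) :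
    ∑ p : X × Θ, h p.1 p.2 * g p.2 = ∑ ϑ, (∑ x, h x ϑ) * g ϑ := by
  calc ∑ p : X × Θ, h p.1 p.2 * g p.2
      = ∑ x, ∑ ϑ, h x ϑ * g ϑ :=
        Fintype.sum_prod_type (f := fun p : X × Θ => h p.1 p.2 * g p.2)
    _ = ∑ ϑ, ∑ x, h x ϑ * g ϑ := Finset.sum_comm
    _ = ∑ ϑ, (∑ x, h x ϑ) * g ϑ :=
        Finset.sum_congr rfl fun ϑ _ => (Finset.sum_mul _ _ _).symm


variable [Nonempty X] [Nonempty Y]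

/-- Strategies of the informed player. -/
abbrev PrimalStrat (Θ X : Type*) [Fintype Θ] [Fintype X] : Type _ :=
  {α : Θ → X → ℝ // ∀ ϑ, (∀ x, 0 ≤ α ϑ x) ∧ ∑ x, α ϑ x = 1}

noncomputable instance : Nonempty (PrimalStrat Θ X) := by
  obtain ⟨β₀⟩ := (inferInstance : Nonempty (Simplex X))
  exact ⟨⟨fun _ => β₀.1, fun _ => β₀.2⟩⟩

/-- The expected payoff. -/
def pay (u : X → Y → Θ → ℝ) (b : Θ → ℝ) (α : Θ → X → ℝ) (β : Y → ℝ) : ℝ :=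
  ∑ ϑ, ∑ x, ∑ y, b ϑ * α ϑ x * β y * u x y ϑ

lemma primalValue_eq (u : X → Y → Θ → ℝ) (b : Θ → ℝ) :
    primalValue u b = ⨆ α : PrimalStrat Θ X, ⨅ β : Simplex Y, pay u b α.1 β.1 := rfl

lemma pay_rearrange (u : X → Y → Θ → ℝ) (b : Θ → ℝ) (α : Θ → X → ℝ) (β : Y → ℝ) :
    pay u b α β = ∑ p : X × Θ, b p.2 * α p.2 p.1 * ∑ y, β y * u p.1 y p.2 :=
  sum_rearrange u b α β

/-- The joint distribution on `X × Θ` induced by a prior and a strategy. -/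
def jointOf (b : Θ → ℝ) (hb : b ∈ stdSimplex ℝ Θ) (α : PrimalStrat Θ X) :
    Simplex (X × Θ) := by
  refine ⟨fun p => b p.2 * α.1 p.2 p.1,
    fun p => mul_nonneg (hb.1 _) ((α.2 p.2).1 p.1), ?_⟩
  have h1 : ∑ p : X × Θ, b p.2 * α.1 p.2 p.1
      = ∑ p : X × Θ, α.1 p.2 p.1 * b p.2 :=
    Finset.sum_congr rfl fun p _ => mul_comm _ _
  rw [h1, marginal_sum (g := b) (h := fun x ϑ => α.1 ϑ x)]
  have h2 : ∀ ϑ, (∑ x, α.1 ϑ x) * b ϑ = b ϑ := fun ϑ => by rw [(α.2 ϑ).2, one_mul]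
  rw [Finset.sum_congr rfl fun ϑ _ => h2 ϑ]
  exact hb.2

lemma jointOf_apply (b : Θ → ℝ) (hb : b ∈ stdSimplex ℝ Θ) (α : PrimalStrat Θ X)
    (p : X × Θ) : (jointOf b hb α).1 p = b p.2 * α.1 p.2 p.1 := rfl

lemma Msum (u : X → Y → Θ → ℝ) (ζ : Θ → ℝ) (β : Simplex Y) (p : X × Θ) :
    ∑ y, β.1 y * (ζ p.2 + u p.1 y p.2) = ζ p.2 + ∑ y, β.1 y * u p.1 y p.2 := by
  rw [Finset.sum_congr rfl fun y _ => mul_add (β.1 y) (ζ p.2) (u p.1 y p.2),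
    Finset.sum_add_distrib, ← Finset.sum_mul, β.2.2, one_mul]

end Main

/-- Fenchel-type duality for the one-shot incomplete-information value
(the γ = 0 instance of Rosenberg's primal–dual relation used in Sec. 4.2):
`w(ζ) = max_{b ∈ Δ(Θ)} { v(b) + ∑_ϑ b(ϑ) ζ(ϑ) }`; moreover `w` is convex in `ζ`
and `v` is concave in `b`. -/
theorem one_shot_duality
    {Θ X Y : Type*} [Fintype Θ] [Fintype X] [Fintype Y]
    [Nonempty Θ] [Nonempty X] [Nonempty Y]
    (u : X → Y → Θ → ℝ) :
    (∀ ζ : Θ → ℝ, dualValue u ζ =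
        ⨆ b : stdSimplex ℝ Θ, (primalValue u b.1 + ∑ ϑ, b.1 ϑ * ζ ϑ)) ∧
    ConvexOn ℝ Set.univ (dualValue u) ∧
    ConcaveOn ℝ (stdSimplex ℝ Θ) (primalValue u) := by
  classical
  haveI : Nonempty (stdSimplex ℝ Θ) := by
    obtain ⟨q⟩ := (inferInstance : Nonempty (Simplex Θ))
    exact ⟨⟨q.1, q.2.1, q.2.2⟩⟩
  obtain ⟨t₀, hmax⟩ := Finite.exists_max fun t : X × Y × Θ => |u t.1 t.2.1 t.2.2|
  set C : ℝ := |u t₀.1 t₀.2.1 t₀.2.2| with hCdef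
  have hC : ∀ x y ϑ, |u x y ϑ| ≤ C := fun x y ϑ => hmax (x, y, ϑ)
  obtain ⟨β₀⟩ := (inferInstance : Nonempty (Simplex Y))
  haveI : Nonempty (stdSimplex ℝ Θ) := by
    obtain ⟨q⟩ := (inferInstance : Nonempty (Simplex Θ))
    exact ⟨⟨q.1, q.2.1, q.2.2⟩⟩
  have hinner_le : ∀ (β : Simplex Y) (p : X × Θ), ∑ y, β.1 y * u p.1 y p.2 ≤ C :=
    fun β p => simplex_avg_le β fun y => (abs_le.1 (hC p.1 y p.2)).2
  have hinner_ge : ∀ (β : Simplex Y) (p : X × Θ), -C ≤ ∑ y, β.1 y * u p.1 y p.2 :=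
    fun β p => le_simplex_avg β fun y => (abs_le.1 (hC p.1 y p.2)).1
  have hpay_le : ∀ b, b ∈ stdSimplex ℝ Θ → ∀ (α : PrimalStrat Θ X) (β : Simplex Y),
      pay u b α.1 β.1 ≤ C := by
    intro b hb α β
    rw [pay_rearrange]
    exact simplex_avg_le (jointOf b hb α) fun p => hinner_le β p
  have hpay_ge : ∀ b, b ∈ stdSimplex ℝ Θ → ∀ (α : PrimalStrat Θ X) (β : Simplex Y),
      -C ≤ pay u b α.1 β.1 := by
    intro b hb α β
    rw [pay_rearrange]
    exact le_simplex_avg (jointOf b hb α) fun p => hinner_ge β p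
  have hbddBelow : ∀ b, b ∈ stdSimplex ℝ Θ → ∀ α : PrimalStrat Θ X,
      BddBelow (Set.range fun β : Simplex Y => pay u b α.1 β.1) :=
    fun b hb α => ⟨-C, by rintro _ ⟨β, rfl⟩; exact hpay_ge b hb α β⟩
  have hinf_le_C : ∀ b, b ∈ stdSimplex ℝ Θ → ∀ α : PrimalStrat Θ X,
      (⨅ β : Simplex Y, pay u b α.1 β.1) ≤ C :=
    fun b hb α => le_trans (ciInf_le (hbddBelow b hb α) β₀) (hpay_le b hb α β₀)
  have hvBdd : ∀ b, b ∈ stdSimplex ℝ Θ →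
      BddAbove (Set.range fun α : PrimalStrat Θ X => ⨅ β : Simplex Y, pay u b α.1 β.1) :=
    fun b hb => ⟨C, by rintro _ ⟨α, rfl⟩; exact hinf_le_C b hb α⟩
  have hv_le : ∀ b, b ∈ stdSimplex ℝ Θ → primalValue u b ≤ C := by
    intro b hb; rw [primalValue_eq]; exact ciSup_le fun α => hinf_le_C b hb α
  have hb_le_one : ∀ b, b ∈ stdSimplex ℝ Θ → ∀ ϑ, b ϑ ≤ 1 := by
    intro b hb ϑ
    have h1 := Finset.single_le_sum (f := b) (fun ϑ _ => hb.1 ϑ) (Finset.mem_univ ϑ)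
    rw [hb.2] at h1
    exact h1
  have hlin_le : ∀ (ζ : Θ → ℝ) b, b ∈ stdSimplex ℝ Θ → ∑ ϑ, b ϑ * ζ ϑ ≤ ∑ ϑ, |ζ ϑ| := by
    intro ζ b hb
    refine Finset.sum_le_sum fun ϑ _ => ?_
    calc b ϑ * ζ ϑ ≤ b ϑ * |ζ ϑ| := mul_le_mul_of_nonneg_left (le_abs_self _) (hb.1 ϑ)
      _ ≤ 1 * |ζ ϑ| := mul_le_mul_of_nonneg_right (hb_le_one b hb ϑ) (abs_nonneg _)
      _ = |ζ ϑ| := one_mul _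
  have hRBdd : ∀ ζ : Θ → ℝ, BddAbove (Set.range fun b : stdSimplex ℝ Θ =>
      primalValue u b.1 + ∑ ϑ, b.1 ϑ * ζ ϑ) := by
    intro ζ
    refine ⟨C + ∑ ϑ, |ζ ϑ|, ?_⟩
    rintro _ ⟨b, rfl⟩
    exact add_le_add (hv_le b.1 b.2) (hlin_le ζ b.1 b.2)
  have hdual : ∀ ζ : Θ → ℝ, dualValue u ζ =
      ⨆ b : stdSimplex ℝ Θ, (primalValue u b.1 + ∑ ϑ, b.1 ϑ * ζ ϑ) := by
    intro ζ
    set M : X × Θ → Y → ℝ := fun p y => ζ p.2 + u p.1 y p.2 with hM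
    have hdv : dualValue u ζ = ⨅ β : Simplex Y, ⨆ p : X × Θ, ∑ y, β.1 y * M p y := by
      simp only [dualValue]
      exact iInf_congr fun β => iSup_congr fun p => (Msum u ζ β p).symm
    apply le_antisymm
    · -- dual ≤ sup
      obtain ⟨π, hπ⟩ := exists_good_prior M
      set b : Θ → ℝ := fun ϑ => ∑ x, π.1 (x, ϑ) with hbdef
      have hbmem : b ∈ stdSimplex ℝ Θ := by
        constructor
        · intro ϑ; exact Finset.sum_nonneg fun x _ => π.2.1 (x, ϑ)
        · calc ∑ ϑ, ∑ x, π.1 (x, ϑ) = ∑ x, ∑ ϑ, π.1 (x, ϑ) := Finset.sum_comm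
            _ = ∑ p : X × Θ, π.1 p := (Fintype.sum_prod_type π.1).symm
            _ = 1 := π.2.2
      set α : Θ → X → ℝ :=
        fun ϑ x => if b ϑ = 0 then (Fintype.card X : ℝ)⁻¹ else π.1 (x, ϑ) / b ϑ with hαdef
      have hcardX : (0:ℝ) < Fintype.card X := by exact_mod_cast Fintype.card_pos
      have hαmem : ∀ ϑ, (∀ x, 0 ≤ α ϑ x) ∧ ∑ x, α ϑ x = 1 := by
        intro ϑ
        by_cases h : b ϑ = 0
        · refine ⟨fun x => ?_, ?_⟩
          · rw [hαdef]; simp only [if_pos h]; positivity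
          · simp only [hαdef, if_pos h]
            rw [Finset.sum_const, nsmul_eq_mul, Finset.card_univ]
            field_simp
        · refine ⟨fun x => ?_, ?_⟩
          · rw [hαdef]; simp only [if_neg h]
            exact div_nonneg (π.2.1 _) (hbmem.1 ϑ)
          · simp only [hαdef, if_neg h]
            rw [← Finset.sum_div, div_eq_one_iff_eq h]
      have hkey : ∀ p : X × Θ, b p.2 * α p.2 p.1 = π.1 p := by
        intro p
        by_cases h : b p.2 = 0
        · have h1 : π.1 (p.1, p.2) ≤ ∑ x, π.1 (x, p.2) :=
            Finset.single_le_sum (f := fun x => π.1 (x, p.2))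
              (fun x _ => π.2.1 _) (Finset.mem_univ p.1)
          rw [Prod.mk.eta] at h1
          have h2 : 0 ≤ π.1 p := π.2.1 p
          have hb0 : b p.2 = ∑ x, π.1 (x, p.2) := rfl
          have h3 : π.1 p = 0 := le_antisymm (by linarith) h2
          rw [h, h3, zero_mul]
        · rw [hαdef]; simp only [if_neg h]
          rw [mul_comm, div_mul_cancel₀ _ h, Prod.mk.eta]
      have hWle : ∀ β : Simplex Y,
          (⨅ β' : Simplex Y, ⨆ p, ∑ y, β'.1 y * M p y) - ∑ ϑ, b ϑ * ζ ϑ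
            ≤ pay u b α β.1 := by
        intro β
        have h1 := hπ β
        have h2 : ∑ p : X × Θ, π.1 p * ∑ y, β.1 y * M p y
            = (∑ ϑ, b ϑ * ζ ϑ) + pay u b α β.1 := by
          have e1 : ∀ p : X × Θ, π.1 p * ∑ y, β.1 y * M p y
              = π.1 p * ζ p.2 + π.1 p * ∑ y, β.1 y * u p.1 y p.2 := by
            intro p
            rw [hM]
            rw [Msum u ζ β p]
            ring
          rw [Finset.sum_congr rfl fun p _ => e1 p, Finset.sum_add_distrib]
          congr 1
          · have h3 := marginal_sum (g := ζ) (h := fun x ϑ => π.1 (x, ϑ))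
            simp only [Prod.mk.eta] at h3
            rw [h3]
          · rw [pay_rearrange]
            exact (Finset.sum_congr rfl fun p _ => by rw [hkey p]).symm
        rw [h2] at h1
        linarith
      have h3 : (⨅ β' : Simplex Y, ⨆ p, ∑ y, β'.1 y * M p y) - ∑ ϑ, b ϑ * ζ ϑ
          ≤ ⨅ β : Simplex Y, pay u b α β.1 := le_ciInf fun β => hWle β
      have h4 : (⨅ β : Simplex Y, pay u b α β.1) ≤ primalValue u b := by
        rw [primalValue_eq]
        exact le_ciSup (hvBdd b hbmem) (⟨α, hαmem⟩ : PrimalStrat Θ X)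
      rw [hdv]
      refine le_trans (show _ ≤ primalValue u b + ∑ ϑ, b ϑ * ζ ϑ by linarith)
        (le_ciSup (hRBdd ζ) (⟨b, hbmem⟩ : stdSimplex ℝ Θ))
    · -- sup ≤ dual
      rw [hdv]
      refine ciSup_le fun b => le_ciInf fun β => ?_
      have hT : ∀ α : PrimalStrat Θ X,
          pay u b.1 α.1 β.1 + ∑ ϑ, b.1 ϑ * ζ ϑ ≤ ⨆ p : X × Θ, ∑ y, β.1 y * M p y := by
        intro α
        have e : pay u b.1 α.1 β.1 + ∑ ϑ, b.1 ϑ * ζ ϑ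
            = ∑ p : X × Θ, (jointOf b.1 b.2 α).1 p * ∑ y, β.1 y * M p y := by
          have e1 : ∀ p : X × Θ, (jointOf b.1 b.2 α).1 p * ∑ y, β.1 y * M p y
              = (jointOf b.1 b.2 α).1 p * ζ p.2
                + b.1 p.2 * α.1 p.2 p.1 * ∑ y, β.1 y * u p.1 y p.2 := by
            intro p
            rw [hM, Msum u ζ β p, jointOf_apply]
            ring
          rw [Finset.sum_congr rfl fun p _ => e1 p, Finset.sum_add_distrib]
          have e2 : ∑ p : X × Θ, (jointOf b.1 b.2 α).1 p * ζ p.2 = ∑ ϑ, b.1 ϑ * ζ ϑ := by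
            have h3 := marginal_sum (g := ζ) (h := fun x ϑ => b.1 ϑ * α.1 ϑ x)
            rw [jointOf] at *
            rw [h3]
            refine Finset.sum_congr rfl fun ϑ _ => ?_
            rw [← Finset.mul_sum, (α.2 ϑ).2, mul_one]
          rw [e2, ← pay_rearrange]
          ring
        rw [e]
        exact simplex_avg_le (jointOf b.1 b.2 α) fun p =>
          le_ciSup (f := fun p : X × Θ => ∑ y, β.1 y * M p y)
            (Set.Finite.bddAbove (Set.finite_range _)) p
      have h6 : (⨆ α : PrimalStrat Θ X, ⨅ β' : Simplex Y, pay u b.1 α.1 β'.1)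
          ≤ (⨆ p : X × Θ, ∑ y, β.1 y * M p y) - ∑ ϑ, b.1 ϑ * ζ ϑ := by
        refine ciSup_le fun α => ?_
        have h7 := ciInf_le (hbddBelow b.1 b.2 α) β
        have h8 := hT α
        linarith
      rw [primalValue_eq]
      linarith
  refine ⟨hdual, ?_, ?_⟩
  · -- convexity of the dual value
    refine ⟨convex_univ, fun ζ₁ _ ζ₂ _ a b ha hb hab => ?_⟩
    rw [hdual (a • ζ₁ + b • ζ₂), hdual ζ₁, hdual ζ₂]
    simp only [smul_eq_mul]
    refine ciSup_le fun q => ?_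
    have e : primalValue u q.1 + ∑ ϑ, q.1 ϑ * (a • ζ₁ + b • ζ₂) ϑ
        = a * (primalValue u q.1 + ∑ ϑ, q.1 ϑ * ζ₁ ϑ)
          + b * (primalValue u q.1 + ∑ ϑ, q.1 ϑ * ζ₂ ϑ) := by
      have e1 : ∑ ϑ, q.1 ϑ * (a • ζ₁ + b • ζ₂) ϑ
          = a * ∑ ϑ, q.1 ϑ * ζ₁ ϑ + b * ∑ ϑ, q.1 ϑ * ζ₂ ϑ := by
        rw [Finset.mul_sum, Finset.mul_sum, ← Finset.sum_add_distrib]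
        refine Finset.sum_congr rfl fun ϑ _ => ?_
        simp only [Pi.add_apply, Pi.smul_apply, smul_eq_mul]
        ring
      rw [e1]
      linear_combination (-(primalValue u q.1)) * hab
    rw [e]
    have t1 : primalValue u q.1 + ∑ ϑ, q.1 ϑ * ζ₁ ϑ
        ≤ ⨆ b' : stdSimplex ℝ Θ, (primalValue u b'.1 + ∑ ϑ, b'.1 ϑ * ζ₁ ϑ) :=
      le_ciSup (hRBdd ζ₁) q
    have t2 : primalValue u q.1 + ∑ ϑ, q.1 ϑ * ζ₂ ϑ
        ≤ ⨆ b' : stdSimplex ℝ Θ, (primalValue u b'.1 + ∑ ϑ, b'.1 ϑ * ζ₂ ϑ) :=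
      le_ciSup (hRBdd ζ₂) q
    exact add_le_add (mul_le_mul_of_nonneg_left t1 ha) (mul_le_mul_of_nonneg_left t2 hb)
  · -- concavity of the primal value
    refine ⟨convex_stdSimplex ℝ Θ, fun b₁ hb₁ b₂ hb₂ a b ha hb hab => ?_⟩
    rcases eq_or_lt_of_le ha with rfl | hapos
    · have hb1 : b = 1 := by linarith
      subst hb1
      simp
    rcases eq_or_lt_of_le hb with rfl | hbpos
    · have ha1 : a = 1 := by linarith
      subst ha1
      simp
    have hcmem : a • b₁ + b • b₂ ∈ stdSimplex ℝ Θ :=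
      (convex_stdSimplex ℝ Θ) hb₁ hb₂ ha hb hab
    simp only [smul_eq_mul]
    set c : Θ → ℝ := a • b₁ + b • b₂ with hcdef
    have hcapp : ∀ ϑ, c ϑ = a * b₁ ϑ + b * b₂ ϑ := fun ϑ => by
      rw [hcdef]; simp [smul_eq_mul]
    have hcardX : (0:ℝ) < Fintype.card X := by exact_mod_cast Fintype.card_pos
    have key : ∀ α₁ α₂ : PrimalStrat Θ X,
        a * (⨅ β : Simplex Y, pay u b₁ α₁.1 β.1)
          + b * (⨅ β : Simplex Y, pay u b₂ α₂.1 β.1) ≤ primalValue u c := by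
      intro α₁ α₂
      set α : Θ → X → ℝ := fun ϑ x => if c ϑ = 0 then (Fintype.card X : ℝ)⁻¹
        else (a * b₁ ϑ * α₁.1 ϑ x + b * b₂ ϑ * α₂.1 ϑ x) / c ϑ with hαdef
      have hcnn : ∀ ϑ, 0 ≤ c ϑ := hcmem.1
      have hnum_nn : ∀ ϑ x, 0 ≤ a * b₁ ϑ * α₁.1 ϑ x + b * b₂ ϑ * α₂.1 ϑ x := fun ϑ x =>
        add_nonneg (mul_nonneg (mul_nonneg ha (hb₁.1 ϑ)) ((α₁.2 ϑ).1 x))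
          (mul_nonneg (mul_nonneg hb (hb₂.1 ϑ)) ((α₂.2 ϑ).1 x))
      have hnum_sum : ∀ ϑ, ∑ x, (a * b₁ ϑ * α₁.1 ϑ x + b * b₂ ϑ * α₂.1 ϑ x) = c ϑ := by
        intro ϑ
        rw [Finset.sum_add_distrib, ← Finset.mul_sum, ← Finset.mul_sum,
          (α₁.2 ϑ).2, (α₂.2 ϑ).2, mul_one, mul_one, hcapp]
      have hαmem : ∀ ϑ, (∀ x, 0 ≤ α ϑ x) ∧ ∑ x, α ϑ x = 1 := by
        intro ϑ
        by_cases h : c ϑ = 0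
        · refine ⟨fun x => ?_, ?_⟩
          · rw [hαdef]; simp only [if_pos h]; positivity
          · simp only [hαdef, if_pos h]
            rw [Finset.sum_const, nsmul_eq_mul, Finset.card_univ]
            field_simp
        · refine ⟨fun x => ?_, ?_⟩
          · rw [hαdef]; simp only [if_neg h]
            exact div_nonneg (hnum_nn ϑ x) (hcnn ϑ)
          · simp only [hαdef, if_neg h]
            rw [← Finset.sum_div, hnum_sum ϑ, div_self h]
      have hkey : ∀ ϑ x, c ϑ * α ϑ x = a * b₁ ϑ * α₁.1 ϑ x + b * b₂ ϑ * α₂.1 ϑ x := by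
        intro ϑ x
        by_cases h : c ϑ = 0
        · have e0 : a * b₁ ϑ + b * b₂ ϑ = 0 := by rw [← hcapp]; exact h
          have e1 : 0 ≤ a * b₁ ϑ := mul_nonneg ha (hb₁.1 ϑ)
          have e2 : 0 ≤ b * b₂ ϑ := mul_nonneg hb (hb₂.1 ϑ)
          have e3 : a * b₁ ϑ = 0 := by linarith
          have e4 : b * b₂ ϑ = 0 := by linarith
          rw [h, zero_mul, e3, e4, zero_mul, zero_mul, add_zero]
        · rw [hαdef]; simp only [if_neg h]
          rw [mul_comm, div_mul_cancel₀ _ h]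
      have hpd : ∀ β : Simplex Y,
          pay u c α β.1 = a * pay u b₁ α₁.1 β.1 + b * pay u b₂ α₂.1 β.1 := by
        intro β
        rw [pay_rearrange, pay_rearrange, pay_rearrange, Finset.mul_sum, Finset.mul_sum,
          ← Finset.sum_add_distrib]
        refine Finset.sum_congr rfl fun p _ => ?_
        rw [hkey p.2 p.1]
        ring
      have h9 : a * (⨅ β : Simplex Y, pay u b₁ α₁.1 β.1)
          + b * (⨅ β : Simplex Y, pay u b₂ α₂.1 β.1)
            ≤ ⨅ β : Simplex Y, pay u c α β.1 := by
        refine le_ciInf fun β => ?_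
        have i1 := ciInf_le (hbddBelow b₁ hb₁ α₁) β
        have i2 := ciInf_le (hbddBelow b₂ hb₂ α₂) β
        rw [hpd β]
        exact add_le_add (mul_le_mul_of_nonneg_left i1 ha)
          (mul_le_mul_of_nonneg_left i2 hb)
      refine le_trans h9 ?_
      rw [primalValue_eq]
      exact le_ciSup (hvBdd c hcmem) (⟨α, hαmem⟩ : PrimalStrat Θ X)
    have hstep1 : primalValue u b₁
        ≤ (primalValue u c - b * primalValue u b₂) / a := by
      rw [primalValue_eq]
      refine ciSup_le fun α₁ => ?_
      rw [le_div_iff₀ hapos]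
      have hstep2 : primalValue u b₂
          ≤ (primalValue u c - a * (⨅ β : Simplex Y, pay u b₁ α₁.1 β.1)) / b := by
        rw [primalValue_eq]
        refine ciSup_le fun α₂ => ?_
        rw [le_div_iff₀ hbpos]
        have := key α₁ α₂
        linarith
      linarith [(le_div_iff₀ hbpos).1 hstep2]
    linarith [(le_div_iff₀ hapos).1 hstep1]
end
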